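/- Suppose every closed walk has weight at most 0. Then for every vertex s₀, the set of weights of walks starting at s₀ is bounded above. -/

import Mathlib

/-- `IsWalk E n s` : `s 0, s 1, …, s n` is a walk in the graph with edge relation `E`. -/
def IsWalk {S : Type*} (E : S → S → Prop) (n : ℕ) (s : ℕ → S) : Prop :=
  ∀ i < n, E (s i) (s (i + 1))

/-- The weight of the walk `s 0, s 1, …, s n`. -/
def walkWeight {S : Type*} (w : S → S → ℝ) (n : ℕ) (s : ℕ → S) : ℝ :=
  ∑ i ∈ Finset.range n, w (s i) (s (i + 1))

lemma sum_range_split (m p : ℕ) (f : ℕ → ℝ) :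
    ∑ k ∈ Finset.range (m + p), f k
      = ∑ k ∈ Finset.range m, f k + ∑ k ∈ Finset.range p, f (m + k) := by
  induction p with
  | zero => simp
  | succ p ih =>
    rw [← Nat.add_assoc, Finset.sum_range_succ, ih, Finset.sum_range_succ]
    ring

/-- If every closed walk has weight at most 0, then the weights of walks starting at
any fixed vertex form a set bounded above. -/
theorem bddAbove_walk_weights {S : Type*} [Fintype S] (E : S → S → Prop) (w : S → S → ℝ)
    (hclosed : ∀ n (s : ℕ → S), IsWalk E n s → s n = s 0 → 1 ≤ n → walkWeight w n s ≤ 0)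
    (s₀ : S) :
    BddAbove {x : ℝ | ∃ (n : ℕ) (s : ℕ → S), IsWalk E n s ∧ s 0 = s₀ ∧ walkWeight w n s = x} := by
  have hne : Nonempty S := ⟨s₀⟩
  obtain ⟨C, hC0, hC⟩ : ∃ C, 0 ≤ C ∧ ∀ a b : S, w a b ≤ C := by
    refine ⟨max 0 ((Finset.univ ×ˢ Finset.univ).sup'
      ⟨(s₀, s₀), Finset.mem_product.mpr ⟨Finset.mem_univ _, Finset.mem_univ _⟩⟩
      fun p : S × S => w p.1 p.2),
      le_max_left _ _, fun a b => le_max_of_le_right ?_⟩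
    exact Finset.le_sup' (f := fun p : S × S => w p.1 p.2)
      (show ((a, b) : S × S) ∈ Finset.univ ×ˢ Finset.univ from
        Finset.mem_product.mpr ⟨Finset.mem_univ _, Finset.mem_univ _⟩)
  set N := Fintype.card S with hN
  have key : ∀ n, ∀ s : ℕ → S, IsWalk E n s → walkWeight w n s ≤ N * C := by
    intro n
    induction n using Nat.strong_induction_on with
    | _ n ih =>
      intro s hs
      by_cases hn : n ≤ N
      · calc walkWeight w n s ≤ ∑ _i ∈ Finset.range n, C :=
            Finset.sum_le_sum fun i _ => hC _ _
          _ = n * C := by simp [mul_comm]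
          _ ≤ N * C := mul_le_mul_of_nonneg_right (by exact_mod_cast hn) hC0
      · push_neg at hn
        obtain ⟨i, j, hij, hjN, hsij⟩ : ∃ i j : ℕ, i < j ∧ j ≤ N ∧ s i = s j := by
          obtain ⟨a, b, hab, heq⟩ := Fintype.exists_ne_map_eq_of_card_lt
            (fun k : Fin (N + 1) => s k) (by simp; omega)
          rcases lt_or_gt_of_ne hab with h | h
          · exact ⟨a, b, h, Nat.lt_succ_iff.mp b.isLt, heq⟩
          · exact ⟨b, a, h, Nat.lt_succ_iff.mp a.isLt, heq.symm⟩
        set d := j - i with hd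
        have hd1 : 1 ≤ d := by omega
        have hjn : j < n := lt_of_le_of_lt hjN hn
        have hjid : j = i + d := by omega
        set s' : ℕ → S := fun k => if k < i then s k else s (k + d) with hs'
        have hcyc : walkWeight w d (fun m => s (i + m)) ≤ 0 := by
          apply hclosed
          · intro k hk
            have := hs (i + k) (by omega)
            simpa [Nat.add_assoc] using this
          · simp only [Nat.add_zero, ← hjid]
            exact hsij.symm
          · exact hd1
        have hwalk' : IsWalk E (n - d) s' := by
          intro k hk
          by_cases hki : k + 1 < i
          · have h1 : k < i := by omega
            simpa [hs', h1, hki] using hs k (by omega)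
          · by_cases hki2 : k < i
            · have hk1 : k + 1 = i := by omega
              have h2 : s (k + 1 + d) = s (k + 1) := by
                rw [hk1, ← hjid]; exact hsij.symm
              simp only [hs', if_pos hki2, if_neg hki, h2]
              exact hs k (by omega)
            · simp only [hs', if_neg hki2, if_neg (by omega : ¬ k + 1 < i)]
              have := hs (k + d) (by omega)
              simpa [Nat.add_right_comm] using this
        have hsum : walkWeight w n s
            = walkWeight w (n - d) s' + walkWeight w d (fun m => s (i + m)) := by
          unfold walkWeight
          obtain ⟨m, hm⟩ : ∃ m, m = n - j := ⟨_, rfl⟩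
          have hn2 : n - d = i + m := by omega
          have hn1 : n = (i + d) + m := by omega
          rw [hn2, hn1, sum_range_split, sum_range_split, sum_range_split]
          have e1 : ∑ k ∈ Finset.range i, w (s' k) (s' (k + 1))
              = ∑ k ∈ Finset.range i, w (s k) (s (k + 1)) := by
            apply Finset.sum_congr rfl
            intro k hk
            have hki : k < i := Finset.mem_range.mp hk
            by_cases hk1 : k + 1 < i
            · simp [hs', hki, hk1]
            · have hk1' : k + 1 = i := by omega
              have h2 : s (k + 1 + d) = s (k + 1) := by
                rw [hk1', ← hjid]; exact hsij.symm
              simp [hs', hki, hk1, h2]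
          have e2 : ∑ k ∈ Finset.range m, w (s' (i + k)) (s' (i + k + 1))
              = ∑ k ∈ Finset.range m, w (s (i + d + k)) (s (i + d + k + 1)) := by
            apply Finset.sum_congr rfl
            intro k _
            have h1 : ¬ i + k < i := by omega
            have h2 : ¬ i + k + 1 < i := by omega
            simp only [hs', if_neg h1, if_neg h2]
            congr 2 <;> omega
          have e3 : ∑ k ∈ Finset.range d, w (s (i + k)) (s (i + (k + 1)))
              = ∑ k ∈ Finset.range d, w (s (i + k)) (s (i + k + 1)) := by
            apply Finset.sum_congr rfl
            intro k _
            congr 2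
          rw [e1, e2, e3]
          ring
        have hle := ih (n - d) (by omega) s' hwalk'
        linarith
  refine ⟨N * C, ?_⟩
  rintro x ⟨n, s, hwalk, -, rfl⟩
  exact key n s hwalk
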